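/- (Per-term bound in the proof of Lemma 3.) Let X be a measurable space, Y = {-1,+1}, D a probability measure on X × Y, F a set of measurable functions f : X → ℝ with a σ-algebra making evaluation jointly measurable, P a probability measure on F, Φ the standard normal CDF, and ℓ_nll(f,x,y) = −log Φ(y·f(x)). Fix a real a > −4 and suppose log E_{f∼P} E_{(x',y')∼D} exp( (a+5)/(2(a+4)) · (y'·f(x'))² ) ≤ M for some M ∈ ℝ (the expectation being finite). Then, assuming L_D(f) = E_{(x,y)∼D} ℓ_nll(f,x,y) is finite P-almost surely, log E_{f∼P} E_{(x',y')∼D} exp( L_D(f) − ℓ_nll(f,x',y') ) ≤ (1/2)·log(2π(a+4)) − a/(2(a+4)) + M. -/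

import Mathlib

open MeasureTheory Real Set Filter Topology

/-- The standard normal cumulative distribution function. -/
noncomputable def stdNormalCDF (z : ℝ) : ℝ :=
  (Real.sqrt (2 * Real.pi))⁻¹ * ∫ t in Set.Iic z, Real.exp (-(t ^ 2) / 2)

lemma gaussInt : Integrable (fun t : ℝ => Real.exp (-(t^2)/2)) := by
  have h := integrable_exp_neg_mul_sq (show (0:ℝ) < 1/2 by norm_num)
  exact h.congr (by filter_upwards with t; norm_num; ring_nf)

lemma gauss_total : ∫ t : ℝ, Real.exp (-(t^2)/2) = Real.sqrt (2*Real.pi) := by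
  have h := integral_gaussian (1/2)
  rw [show Real.sqrt (Real.pi / (1/2)) = Real.sqrt (2*Real.pi) by norm_num [mul_comm]] at h
  rw [← h]
  congr 1; funext t; congr 1; ring

lemma gauss_cont : Continuous (fun t : ℝ => Real.exp (-(t^2)/2)) := by fun_prop

lemma I_deriv (z : ℝ) : HasDerivAt (fun w => ∫ t in Iic w, Real.exp (-(t^2)/2))
    (Real.exp (-(z^2)/2)) z := by
  have key : ∀ w : ℝ, ∫ t in Iic w, Real.exp (-(t^2)/2)
      = (∫ t in Iic (0:ℝ), Real.exp (-(t^2)/2)) + ∫ t in (0:ℝ)..w, Real.exp (-(t^2)/2) := by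
    intro w
    rw [← intervalIntegral.integral_Iic_sub_Iic gaussInt.integrableOn gaussInt.integrableOn]
    ring
  have h : HasDerivAt (fun w => (∫ t in Iic (0:ℝ), Real.exp (-(t^2)/2))
      + ∫ t in (0:ℝ)..w, Real.exp (-(t^2)/2)) (Real.exp (-(z^2)/2)) z :=
    (intervalIntegral.integral_hasDerivAt_right
      gaussInt.intervalIntegrable
      gauss_cont.stronglyMeasurable.stronglyMeasurableAtFilter
      gauss_cont.continuousAt).const_add _
  exact h.congr_of_eventuallyEq (Filter.Eventually.of_forall key)

lemma I_nonneg (z : ℝ) : 0 ≤ ∫ t in Iic z, Real.exp (-(t^2)/2) :=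
  setIntegral_nonneg measurableSet_Iic (fun t _ => (Real.exp_pos _).le)

lemma I_le_total (z : ℝ) : (∫ t in Iic z, Real.exp (-(t^2)/2)) ≤ Real.sqrt (2*Real.pi) := by
  rw [← gauss_total]
  exact setIntegral_le_integral gaussInt (Filter.Eventually.of_forall fun t => (Real.exp_pos _).le)

lemma I_zero : (∫ t in Iic (0:ℝ), Real.exp (-(t^2)/2)) = Real.sqrt (2*Real.pi) / 2 := by
  have hsym : (∫ t in Iic (0:ℝ), Real.exp (-(t^2)/2)) = ∫ t in Ioi (0:ℝ), Real.exp (-(t^2)/2) := by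
    have := integral_comp_neg_Iic (0:ℝ) (fun t => Real.exp (-(t^2)/2))
    simp only [neg_zero] at this
    rw [← this]
    congr 1; funext t; congr 1; ring
  have hsplit := intervalIntegral.integral_Iic_add_Ioi (b := (0:ℝ)) (μ := volume)
    (f := fun t => Real.exp (-(t^2)/2)) gaussInt.integrableOn gaussInt.integrableOn
  rw [gauss_total] at hsplit
  linarith

lemma Q_le {x : ℝ} (hx : 2 ≤ x) :
    (∫ t in Iic (-x), Real.exp (-(t^2)/2)) ≤ Real.exp (-x) := by
  have h1 : (∫ t in Iic (-x), Real.exp (-(t^2)/2)) ≤ ∫ t in Iic (-x), Real.exp t := by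
    refine setIntegral_mono_on gaussInt.integrableOn (integrableOn_exp_Iic _)
      measurableSet_Iic (fun t ht => ?_)
    have ht' : t ≤ -x := ht
    exact Real.exp_le_exp.2 (by nlinarith)
  rwa [integral_exp_Iic] at h1

lemma Q_tendsto : Tendsto (fun x : ℝ => ∫ t in Iic (-x), Real.exp (-(t^2)/2)) atTop (𝓝 0) := by
  have hexp : Tendsto (fun x : ℝ => Real.exp (-x)) atTop (𝓝 0) :=
    Real.tendsto_exp_atBot.comp tendsto_neg_atTop_atBot
  refine tendsto_of_tendsto_of_tendsto_of_le_of_le' tendsto_const_nhds hexp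
    (Filter.Eventually.of_forall fun x => I_nonneg _) ?_
  filter_upwards [eventually_ge_atTop (2:ℝ)] with x hx using Q_le hx

noncomputable def uK (x : ℝ) : ℝ := (Real.sqrt (x^2+4) - x)/2

lemma uK_s_facts (x : ℝ) : (Real.sqrt (x^2+4))^2 = x^2+4 ∧ 0 < Real.sqrt (x^2+4) := by
  constructor
  · exact Real.sq_sqrt (by positivity)
  · exact Real.sqrt_pos.2 (by positivity)

lemma uK_pos (x : ℝ) : 0 < uK x := by
  obtain ⟨hs2, hsp⟩ := uK_s_facts x
  have : x < Real.sqrt (x^2+4) := by nlinarith [sq_nonneg (Real.sqrt (x^2+4) - x)]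
  unfold uK; linarith

lemma uK_hasDeriv (x : ℝ) :
    HasDerivAt uK ((2*x / (2 * Real.sqrt (x^2+4)) - 1)/2) x := by
  have h1 : HasDerivAt (fun x : ℝ => x^2+4) (2*x) x := by
    simpa using ((hasDerivAt_pow 2 x).add_const 4)
  have h2 := (h1.sqrt (by positivity)).sub (hasDerivAt_id x)
  exact h2.div_const 2

lemma g_hasDeriv (x : ℝ) :
    HasDerivAt (fun t : ℝ => Real.exp (-(t^2)/2)) (Real.exp (-(x^2)/2) * (-x)) x := by
  have h1 : HasDerivAt (fun t : ℝ => -(t^2)/2) (-x) x := by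
    have := (hasDerivAt_pow 2 x).neg.div_const 2
    simpa using this.congr_deriv (by ring)
  exact h1.exp

noncomputable def hK (x : ℝ) : ℝ :=
  (∫ t in Iic (-x), Real.exp (-(t^2)/2)) - uK x * Real.exp (-(x^2)/2)

lemma hK_hasDeriv (x : ℝ) :
    HasDerivAt hK
      (Real.exp (-(x^2)/2) * (-1) * 1 -
        ((2*x / (2 * Real.sqrt (x^2+4)) - 1)/2 * Real.exp (-(x^2)/2)
          + uK x * (Real.exp (-(x^2)/2) * (-x)))) x := by
  have hQ : HasDerivAt (fun x : ℝ => ∫ t in Iic (-x), Real.exp (-(t^2)/2))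
      (Real.exp (-(x^2)/2) * (-1) * 1) x := by
    have := (I_deriv (-x)).comp x ((hasDerivAt_id x).neg)
    simpa [Function.comp_def] using this.congr_deriv (by rw [neg_pow]; ring_nf)
  exact hQ.sub ((uK_hasDeriv x).mul (g_hasDeriv x))

lemma hK_deriv_nonpos {x : ℝ} (hx : 0 ≤ x) :
    (Real.exp (-(x^2)/2) * (-1) * 1 -
        ((2*x / (2 * Real.sqrt (x^2+4)) - 1)/2 * Real.exp (-(x^2)/2)
          + uK x * (Real.exp (-(x^2)/2) * (-x)))) ≤ 0 := by
  obtain ⟨hs2, hsp⟩ := uK_s_facts x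
  set s := Real.sqrt (x^2+4) with hs
  set g := Real.exp (-(x^2)/2) with hg
  have hgp : 0 < g := Real.exp_pos _
  have hu : uK x = (s - x)/2 := rfl
  have hup : 0 < uK x := uK_pos x
  -- key: x*s ≤ x^2+2
  have hxs : x*s ≤ x^2+2 := by nlinarith [sq_nonneg (s - x)]
  -- expression = g * (-1 - u' + x*u) where u' = (x/s - 1)/2
  have hfactor : (g * (-1) * 1 -
      ((2*x / (2*s) - 1)/2 * g + uK x * (g * (-x))))
      = g * ((1 - x/s)/2 - uK x ^2 - (1 - uK x ^2 - x * uK x)) := by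
    rw [hu]; field_simp; ring
  rw [hfactor]
  have husq : uK x ^2 + x * uK x = 1 := by rw [hu]; field_simp; nlinarith
  have h1 : (1 - x/s)/2 = uK x / s := by
    rw [hu]
    rw [div_div]
    rw [div_eq_div_iff (by norm_num) (by positivity)]
    field_simp
  have h2 : uK x / s ≤ uK x ^2 := by
    rw [div_le_iff₀ hsp]
    have : 1/s ≤ uK x := by
      rw [div_le_iff₀ hsp, hu]
      nlinarith
    nlinarith
  nlinarith

lemma hK_antitone : AntitoneOn hK (Ici 0) := by
  have hdiff : Differentiable ℝ hK := fun x => (hK_hasDeriv x).differentiableAt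
  refine antitoneOn_of_deriv_nonpos (convex_Ici 0) hdiff.continuous.continuousOn
    (hdiff.differentiableOn) (fun x hx => ?_)
  rw [(hK_hasDeriv x).deriv]
  exact hK_deriv_nonpos (le_of_lt (by simpa using hx))

lemma uK_le_one {x : ℝ} (hx : 0 ≤ x) : uK x ≤ 1 := by
  obtain ⟨hs2, hsp⟩ := uK_s_facts x
  have : Real.sqrt (x^2+4) ≤ x + 2 := by nlinarith
  unfold uK; linarith

lemma hK_tendsto : Tendsto hK atTop (𝓝 0) := by
  have hexp : Tendsto (fun x : ℝ => Real.exp (-x)) atTop (𝓝 0) :=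
    Real.tendsto_exp_atBot.comp tendsto_neg_atTop_atBot
  have hug : Tendsto (fun x => uK x * Real.exp (-(x^2)/2)) atTop (𝓝 0) := by
    refine tendsto_of_tendsto_of_tendsto_of_le_of_le' tendsto_const_nhds hexp ?_ ?_
    · filter_upwards [eventually_ge_atTop (0:ℝ)] with x hx
      exact mul_nonneg (uK_pos x).le (Real.exp_pos _).le
    · filter_upwards [eventually_ge_atTop (2:ℝ)] with x hx
      have h1 : uK x ≤ 1 := uK_le_one (by linarith)
      have h2 : Real.exp (-(x^2)/2) ≤ Real.exp (-x) := Real.exp_le_exp.2 (by nlinarith)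
      nlinarith [Real.exp_pos (-(x^2)/2), (uK_pos x)]
  have := Q_tendsto.sub hug
  unfold hK
  simpa only [sub_zero] using this

lemma komatsu {x : ℝ} (hx : 0 ≤ x) :
    uK x * Real.exp (-(x^2)/2) ≤ ∫ t in Iic (-x), Real.exp (-(t^2)/2) := by
  have h0 : 0 ≤ hK x := by
    refine le_of_tendsto hK_tendsto ?_
    filter_upwards [eventually_ge_atTop x] with y hy
    exact hK_antitone hx (le_trans hx hy) hy
  unfold hK at h0; linarith

lemma sqrt2pi_pos : 0 < Real.sqrt (2*Real.pi) := Real.sqrt_pos.2 (by positivity)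

lemma stdNormalCDF_mono : Monotone stdNormalCDF := by
  intro z w h
  unfold stdNormalCDF
  refine mul_le_mul_of_nonneg_left ?_ (inv_nonneg.2 (Real.sqrt_nonneg _))
  refine setIntegral_mono_set gaussInt.integrableOn
    (Filter.Eventually.of_forall fun t => (Real.exp_pos _).le)
    (HasSubset.Subset.eventuallyLE (Iic_subset_Iic.2 h))

lemma stdNormalCDF_le_one (z : ℝ) : stdNormalCDF z ≤ 1 := by
  unfold stdNormalCDF
  rw [← inv_mul_cancel₀ sqrt2pi_pos.ne']
  exact mul_le_mul_of_nonneg_left (I_le_total z) (inv_nonneg.2 (Real.sqrt_nonneg _))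

lemma stdNormalCDF_zero : stdNormalCDF 0 = 1/2 := by
  unfold stdNormalCDF
  rw [I_zero, ← mul_div_assoc, inv_mul_cancel₀ sqrt2pi_pos.ne']

lemma stdNormalCDF_half {z : ℝ} (hz : 0 ≤ z) : 1/2 ≤ stdNormalCDF z :=
  stdNormalCDF_zero ▸ stdNormalCDF_mono hz

lemma logfact {b : ℝ} (hb : 0 < b) :
    (b-4)/(2*b) + Real.log 2 ≤ (1/2) * Real.log (2*Real.pi*b) := by
  have h1 : Real.log (2*Real.pi*b) = Real.log (8*Real.pi) + Real.log (b/4) := by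
    rw [← Real.log_mul (by positivity) (by positivity)]
    congr 1; field_simp; ring
  have h2 : Real.log (4/b) ≤ 4/b - 1 := Real.log_le_sub_one_of_pos (by positivity)
  have h3 : Real.log (4/b) = - Real.log (b/4) := by
    rw [← Real.log_inv]; congr 1; field_simp
  have h4 : Real.log 4 ≤ Real.log (8*Real.pi) :=
    Real.log_le_log (by norm_num) (by nlinarith [Real.pi_gt_three])
  have h5 : Real.log 4 = 2 * Real.log 2 := by
    rw [show (4:ℝ) = 2^2 by norm_num, Real.log_pow]; push_cast; ring
  have h6 : (b-4)/(2*b) = 1/2 - 2/b := by field_simp; ring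
  have h7 : (0:ℝ) < 4/b := by positivity
  rw [h1, h6]
  have h8 : 1 - 4/b ≤ Real.log (b/4) := by linarith [h3 ▸ h2]
  have h9 : 2/b = (1/2)*(4/b) := by ring
  linarith

lemma stdNormalCDF_key {b : ℝ} (hb : 0 < b) (z : ℝ) :
    Real.exp (-((b+1)/(2*b)) * z^2 + (b-4)/(2*b))
      ≤ Real.sqrt (2*Real.pi*b) * stdNormalCDF z := by
  have hsb : 0 < Real.sqrt (2*Real.pi*b) := Real.sqrt_pos.2 (by positivity)
  rcases le_or_gt 0 z with hz | hz
  · -- z ≥ 0 : use Φ z ≥ 1/2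
    have h1 : Real.exp (-((b+1)/(2*b)) * z^2 + (b-4)/(2*b)) ≤ Real.exp ((b-4)/(2*b)) := by
      apply Real.exp_le_exp.2
      have : 0 ≤ ((b+1)/(2*b)) * z^2 := by positivity
      linarith
    have h2 : Real.exp ((b-4)/(2*b)) ≤ Real.sqrt (2*Real.pi*b) / 2 := by
      have hlog : (b-4)/(2*b) ≤ Real.log (Real.sqrt (2*Real.pi*b) / 2) := by
        rw [Real.log_div hsb.ne' (by norm_num), Real.log_sqrt (by positivity)]
        have := logfact hb
        linarith
      calc Real.exp ((b-4)/(2*b)) ≤ Real.exp (Real.log (Real.sqrt (2*Real.pi*b) / 2)) :=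
            Real.exp_le_exp.2 hlog
        _ = Real.sqrt (2*Real.pi*b) / 2 := Real.exp_log (by positivity)
    have h3 : Real.sqrt (2*Real.pi*b) / 2 ≤ Real.sqrt (2*Real.pi*b) * stdNormalCDF z := by
      have := stdNormalCDF_half hz
      nlinarith
    linarith
  · -- z < 0 : use Komatsu
    obtain ⟨x, hzx, hxpos⟩ : ∃ x, z = -x ∧ 0 < x := ⟨-z, by ring, by linarith⟩
    have hkom := komatsu hxpos.le
    have hPhi : Real.sqrt (2*Real.pi*b) * stdNormalCDF z
        ≥ Real.sqrt b * (uK x * Real.exp (-(x^2)/2)) := by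
      rw [hzx]
      unfold stdNormalCDF
      have hfac : Real.sqrt (2*Real.pi*b) = Real.sqrt (2*Real.pi) * Real.sqrt b := by
        rw [← Real.sqrt_mul (by positivity)]
      rw [hfac]
      have : Real.sqrt (2*Real.pi) * Real.sqrt b *
          ((Real.sqrt (2*Real.pi))⁻¹ * ∫ t in Set.Iic (-x), Real.exp (-(t ^ 2) / 2))
          = Real.sqrt b * ∫ t in Set.Iic (-x), Real.exp (-(t ^ 2) / 2) := by
        field_simp
      rw [this]
      have hb' : 0 ≤ Real.sqrt b := Real.sqrt_nonneg b
      exact mul_le_mul_of_nonneg_left hkom hb'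
    refine le_trans ?_ hPhi
    -- log comparison
    have hupos := uK_pos x
    have hsqb : 0 < Real.sqrt b := Real.sqrt_pos.2 hb
    have hrhs : Real.sqrt b * (uK x * Real.exp (-(x^2)/2))
        = Real.exp (Real.log (Real.sqrt b) + Real.log (uK x) + (-(x^2)/2)) := by
      rw [Real.exp_add, Real.exp_add, Real.exp_log hsqb, Real.exp_log hupos]
      ring
    rw [hrhs]
    apply Real.exp_le_exp.2
    have hz2 : z^2 = x^2 := by rw [hzx]; ring
    rw [hz2]
    -- facts
    obtain ⟨hs2, hsp⟩ : (Real.sqrt (x^2+4))^2 = x^2+4 ∧ 0 < Real.sqrt (x^2+4) :=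
      ⟨Real.sq_sqrt (by positivity), Real.sqrt_pos.2 (by positivity)⟩
    set s := Real.sqrt (x^2+4) with hs
    have hxs : x*s ≤ x^2+2 := by nlinarith [sq_nonneg (s - x)]
    have l2 : 0 ≤ Real.log (uK x) + (1/2)*Real.log (x^2+4) := by
      have husq : 1 ≤ uK x * s := by
        have : uK x * s = (s^2 - x*s)/2 := by unfold uK; rw [← hs]; ring
        rw [this, hs2]; linarith
      have : Real.log (uK x) + (1/2)*Real.log (x^2+4) = Real.log (uK x * s) := by
        rw [Real.log_mul hupos.ne' hsp.ne', hs, Real.log_sqrt (by positivity)]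
        ring
      rw [this]
      exact Real.log_nonneg husq
    have l1 : 1 - (x^2+4)/b ≤ Real.log b - Real.log (x^2+4) := by
      have h2 : Real.log ((x^2+4)/b) ≤ (x^2+4)/b - 1 :=
        Real.log_le_sub_one_of_pos (by positivity)
      rw [Real.log_div (by positivity) hb.ne'] at h2
      linarith
    have hlogsb : Real.log (Real.sqrt b) = (1/2) * Real.log b := by
      rw [Real.log_sqrt hb.le]; ring
    have e1 : -((b+1)/(2*b)) * x^2 + (b-4)/(2*b) + x^2/2 = 1/2 - (x^2+4)/(2*b) := by
      field_simp; ring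
    have e2 : (x^2+4)/(2*b) = (1/2) * ((x^2+4)/b) := by ring
    rw [hlogsb]
    nlinarith [l1, l2, e1, e2]

lemma stdNormalCDF_pos (z : ℝ) : 0 < stdNormalCDF z := by
  have hk := stdNormalCDF_key (b := 4) (by norm_num) z
  have he := Real.exp_pos (-((4+1)/(2*4)) * z^2 + (4-4)/(2*4))
  by_contra h
  push_neg at h
  nlinarith [Real.sqrt_nonneg (2*Real.pi*4)]

lemma stdNormalCDF_inv_le {b : ℝ} (hb : 0 < b) (z : ℝ) :
    (stdNormalCDF z)⁻¹
      ≤ Real.sqrt (2*Real.pi*b) * Real.exp (((b+1)/(2*b)) * z^2 - (b-4)/(2*b)) := by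
  have hp := stdNormalCDF_pos z
  have hk := stdNormalCDF_key hb z
  have hmul := mul_le_mul_of_nonneg_right hk
    (Real.exp_pos (((b+1)/(2*b)) * z^2 - (b-4)/(2*b))).le
  rw [← Real.exp_add, show (-((b+1)/(2*b)) * z^2 + (b-4)/(2*b))
      + (((b+1)/(2*b)) * z^2 - (b-4)/(2*b)) = 0 by ring, Real.exp_zero] at hmul
  rw [show (stdNormalCDF z)⁻¹ = 1 / stdNormalCDF z by rw [one_div], div_le_iff₀ hp]
  nlinarith

/-- The negative log likelihood loss `ℓ_nll(f, x, y) = −log Φ(y·f(x))`. -/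
noncomputable def nllLoss {F X : Type*} (ev : F → X → ℝ) (f : F) (p : X × ℝ) : ℝ :=
  -Real.log (stdNormalCDF (p.2 * ev f p.1))

/-- The expected risk `L_D(f) = E_{(x,y)∼D} ℓ_nll(f,x,y)`. -/
noncomputable def expRisk {F X : Type*} [MeasurableSpace X]
    (D : Measure (X × ℝ)) (ev : F → X → ℝ) (f : F) : ℝ :=
  ∫ p, nllLoss ev f p ∂D

/-- Per-term bound in the proof of Lemma 3: for a fixed `a > −4` and a bound `M` on the
log moment `log E_P E_D exp((a+5)/(2(a+4))·(y'·f(x'))²)`, one has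
`log E_P E_D exp(L_D(f) − ℓ_nll(f,x',y')) ≤ (1/2)log(2π(a+4)) − a/(2(a+4)) + M`. -/
theorem stmt_12 {X : Type*} [MeasurableSpace X] {F : Type*} [MeasurableSpace F]
    (D : Measure (X × ℝ)) [IsProbabilityMeasure D]
    (hD : ∀ᵐ p ∂D, p.2 = 1 ∨ p.2 = -1)
    (ev : F → X → ℝ) (hev : Measurable fun q : F × X => ev q.1 q.2)
    (P : Measure F) [IsProbabilityMeasure P]
    (a M : ℝ) (ha : -4 < a)
    (hM : Real.log (∫ f, ∫ p,
        Real.exp ((a + 5) / (2 * (a + 4)) * (p.2 * ev f p.1) ^ 2) ∂D ∂P) ≤ M)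
    (hMfin : Integrable (fun q : F × (X × ℝ) =>
        Real.exp ((a + 5) / (2 * (a + 4)) * (q.2.2 * ev q.1 q.2.1) ^ 2)) (P.prod D))
    -- `L_D(f)` is finite `P`-almost surely
    (hrisk : ∀ᵐ f ∂P, Integrable (fun p => nllLoss ev f p) D) :
    Real.log (∫ f, ∫ p, Real.exp (expRisk D ev f - nllLoss ev f p) ∂D ∂P)
      ≤ (1 / 2) * Real.log (2 * Real.pi * (a + 4)) - a / (2 * (a + 4)) + M := by
  have hb : (0:ℝ) < a + 4 := by linarith
  set c := (a + 5) / (2 * (a + 4)) with hc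
  have hcpos : 0 < c := by rw [hc]; exact div_pos (by linarith) (by linarith)
  set C : ℝ := Real.sqrt (2*Real.pi*(a+4)) * Real.exp (-(a/(2*(a+4)))) with hC
  have hCpos : 0 < C := by rw [hC]; positivity
  -- pointwise bound
  have hpoint : ∀ w : ℝ, (stdNormalCDF w)⁻¹ ≤ C * Real.exp (c * w^2) := by
    intro w
    have h := stdNormalCDF_inv_le (b := a+4) hb w
    rw [show ((a+4)+1)/(2*(a+4)) = c by rw [hc]; ring,
        show ((a+4)-4)/(2*(a+4)) = a/(2*(a+4)) by ring] at h
    calc (stdNormalCDF w)⁻¹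
        ≤ Real.sqrt (2*Real.pi*(a+4)) * Real.exp (c * w^2 - a/(2*(a+4))) := h
      _ = C * Real.exp (c * w^2) := by
          rw [hC, show c * w^2 - a/(2*(a+4)) = c*w^2 + (-(a/(2*(a+4)))) by ring,
            Real.exp_add]
          ring
  -- exp of losses
  have hexp_nll : ∀ (f : F) (p : X × ℝ),
      Real.exp (nllLoss ev f p) = (stdNormalCDF (p.2 * ev f p.1))⁻¹ := by
    intro f p
    rw [nllLoss, Real.exp_neg, Real.exp_log (stdNormalCDF_pos _)]
  have hexp_neg_nll : ∀ (f : F) (p : X × ℝ),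
      Real.exp (-nllLoss ev f p) = stdNormalCDF (p.2 * ev f p.1) := by
    intro f p
    rw [nllLoss, neg_neg, Real.exp_log (stdNormalCDF_pos _)]
  -- measurability
  have hΦmeas : Measurable stdNormalCDF := stdNormalCDF_mono.measurable
  have hz_meas : Measurable (fun q : F × (X × ℝ) => q.2.2 * ev q.1 q.2.1) := by
    exact (measurable_snd.comp measurable_snd).mul
      (hev.comp (measurable_fst.prodMk (measurable_fst.comp measurable_snd)))
  have hnll_meas : Measurable (fun q : F × (X × ℝ) => nllLoss ev q.1 q.2) := by
    unfold nllLoss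
    exact (Real.measurable_log.comp (hΦmeas.comp hz_meas)).neg
  have hrisk_meas : StronglyMeasurable (expRisk D ev) := by
    have := hnll_meas.stronglyMeasurable.integral_prod_right' (ν := D)
    exact this
  have hint_meas : Measurable
      (fun q : F × (X × ℝ) => Real.exp (expRisk D ev q.1 - nllLoss ev q.1 q.2)) :=
    Real.measurable_exp.comp ((hrisk_meas.measurable.comp measurable_fst).sub hnll_meas)
  have hGslice : ∀ᵐ f ∂P, Integrable
      (fun p : X × ℝ => Real.exp (c * (p.2 * ev f p.1) ^ 2)) D := hMfin.prod_right_ae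
  have hg1_meas : StronglyMeasurable
      (fun f => ∫ p, Real.exp (expRisk D ev f - nllLoss ev f p) ∂D) :=
    hint_meas.stronglyMeasurable.integral_prod_right' (ν := D)
  have hg2_int : Integrable (fun f => ∫ p, Real.exp (c * (p.2 * ev f p.1) ^ 2) ∂D) P :=
    hMfin.integral_prod_left
  -- a.e. inner bound
  have h1ae : ∀ᵐ f ∂P, (∫ p, Real.exp (expRisk D ev f - nllLoss ev f p) ∂D)
      ≤ C * ∫ p, Real.exp (c * (p.2 * ev f p.1) ^ 2) ∂D := by
    filter_upwards [hrisk, hGslice] with f hf hGf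
    have hzf : Measurable (fun p : X × ℝ => p.2 * ev f p.1) :=
      measurable_snd.mul (hev.comp (measurable_const.prodMk measurable_fst))
    have hΦint : Integrable (fun p : X × ℝ => stdNormalCDF (p.2 * ev f p.1)) D := by
      refine Integrable.mono' (integrable_const 1)
        (hΦmeas.comp hzf).aestronglyMeasurable ?_
      filter_upwards with p
      rw [Real.norm_eq_abs, abs_of_pos (stdNormalCDF_pos _)]
      exact stdNormalCDF_le_one _
    have hΦle : (∫ p, stdNormalCDF (p.2 * ev f p.1) ∂D) ≤ 1 := by
      calc (∫ p, stdNormalCDF (p.2 * ev f p.1) ∂D) ≤ ∫ _, (1:ℝ) ∂D :=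
            integral_mono hΦint (integrable_const 1) (fun p => stdNormalCDF_le_one _)
        _ = 1 := by simp
    have hexpnll_int : Integrable (fun p => Real.exp (nllLoss ev f p)) D := by
      refine Integrable.mono' (hGf.const_mul C)
        (Real.measurable_exp.comp
          ((Real.measurable_log.comp (hΦmeas.comp hzf)).neg)).aestronglyMeasurable ?_
      filter_upwards with p
      rw [Real.norm_eq_abs, abs_of_pos (Real.exp_pos _), hexp_nll]
      exact hpoint _
    have hJ : Real.exp (expRisk D ev f) ≤ ∫ p, Real.exp (nllLoss ev f p) ∂D := by
      have hpt : ∀ p : X × ℝ, Real.exp (expRisk D ev f) * (1 + nllLoss ev f p - expRisk D ev f)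
          ≤ Real.exp (nllLoss ev f p) := by
        intro p
        have h := Real.add_one_le_exp (nllLoss ev f p - expRisk D ev f)
        have h2 := mul_le_mul_of_nonneg_left h (Real.exp_pos (expRisk D ev f)).le
        rw [← Real.exp_add, show expRisk D ev f + (nllLoss ev f p - expRisk D ev f)
            = nllLoss ev f p by ring] at h2
        calc Real.exp (expRisk D ev f) * (1 + nllLoss ev f p - expRisk D ev f)
            = Real.exp (expRisk D ev f) * (nllLoss ev f p - expRisk D ev f + 1) := by ring
          _ ≤ _ := h2
      have hint2 : Integrable
          (fun p => Real.exp (expRisk D ev f) * (1 + nllLoss ev f p - expRisk D ev f)) D := by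
        have : Integrable (fun p => 1 + nllLoss ev f p - expRisk D ev f) D := by
          have h3 := (hf.add (integrable_const (1 - expRisk D ev f)))
          exact h3.congr (by filter_upwards with p; simp only [Pi.add_apply]; ring)
        exact this.const_mul _
      have h4 := integral_mono hint2 hexpnll_int hpt
      rw [integral_const_mul] at h4
      have h5 : (∫ p, (1 + nllLoss ev f p - expRisk D ev f) ∂D) = 1 := by
        have he : (fun p => 1 + nllLoss ev f p - expRisk D ev f)
            = fun p => nllLoss ev f p + (1 - expRisk D ev f) := by funext p; ring
        rw [he, integral_add hf (integrable_const _), integral_const]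
        simp [expRisk]
      rw [h5, mul_one] at h4
      exact h4
    have heq : (∫ p, Real.exp (expRisk D ev f - nllLoss ev f p) ∂D)
        = Real.exp (expRisk D ev f) * ∫ p, stdNormalCDF (p.2 * ev f p.1) ∂D := by
      rw [← integral_const_mul]
      congr 1; funext p
      rw [show expRisk D ev f - nllLoss ev f p
          = expRisk D ev f + (-nllLoss ev f p) by ring, Real.exp_add, hexp_neg_nll]
    have hexpint_le : (∫ p, Real.exp (nllLoss ev f p) ∂D)
        ≤ C * ∫ p, Real.exp (c * (p.2 * ev f p.1) ^ 2) ∂D := by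
      calc (∫ p, Real.exp (nllLoss ev f p) ∂D)
          ≤ ∫ p, C * Real.exp (c * (p.2 * ev f p.1) ^ 2) ∂D :=
            integral_mono hexpnll_int (hGf.const_mul C)
              (fun p => by rw [hexp_nll]; exact hpoint _)
        _ = C * ∫ p, Real.exp (c * (p.2 * ev f p.1) ^ 2) ∂D := integral_const_mul _ _
    have hΦnn : 0 ≤ ∫ p, stdNormalCDF (p.2 * ev f p.1) ∂D :=
      integral_nonneg fun p => (stdNormalCDF_pos _).le
    calc (∫ p, Real.exp (expRisk D ev f - nllLoss ev f p) ∂D)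
        = Real.exp (expRisk D ev f) * ∫ p, stdNormalCDF (p.2 * ev f p.1) ∂D := heq
      _ ≤ Real.exp (expRisk D ev f) * 1 :=
          mul_le_mul_of_nonneg_left hΦle (Real.exp_pos _).le
      _ = Real.exp (expRisk D ev f) := mul_one _
      _ ≤ ∫ p, Real.exp (nllLoss ev f p) ∂D := hJ
      _ ≤ C * ∫ p, Real.exp (c * (p.2 * ev f p.1) ^ 2) ∂D := hexpint_le
  -- outer integral
  have hg1_nonneg : ∀ f, 0 ≤ ∫ p, Real.exp (expRisk D ev f - nllLoss ev f p) ∂D :=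
    fun f => integral_nonneg fun p => (Real.exp_pos _).le
  have hg1_int : Integrable (fun f => ∫ p, Real.exp (expRisk D ev f - nllLoss ev f p) ∂D) P := by
    refine Integrable.mono' (hg2_int.const_mul C) hg1_meas.aestronglyMeasurable ?_
    filter_upwards [h1ae] with f h1
    rw [Real.norm_eq_abs, abs_of_nonneg (hg1_nonneg f)]
    exact h1
  have houter : (∫ f, ∫ p, Real.exp (expRisk D ev f - nllLoss ev f p) ∂D ∂P)
      ≤ C * ∫ f, ∫ p, Real.exp (c * (p.2 * ev f p.1) ^ 2) ∂D ∂P := by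
    calc (∫ f, ∫ p, Real.exp (expRisk D ev f - nllLoss ev f p) ∂D ∂P)
        ≤ ∫ f, C * ∫ p, Real.exp (c * (p.2 * ev f p.1) ^ 2) ∂D ∂P :=
          integral_mono_ae hg1_int (hg2_int.const_mul C) h1ae
      _ = C * ∫ f, ∫ p, Real.exp (c * (p.2 * ev f p.1) ^ 2) ∂D ∂P := integral_const_mul _ _
  have hE1 : 1 ≤ ∫ f, ∫ p, Real.exp (c * (p.2 * ev f p.1) ^ 2) ∂D ∂P := by
    have hae : ∀ᵐ f ∂P, 1 ≤ ∫ p, Real.exp (c * (p.2 * ev f p.1) ^ 2) ∂D := by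
      filter_upwards [hGslice] with f hGf
      calc (1:ℝ) = ∫ _, (1:ℝ) ∂D := by simp
        _ ≤ ∫ p, Real.exp (c * (p.2 * ev f p.1) ^ 2) ∂D :=
          integral_mono (integrable_const 1) hGf
            (fun p => Real.one_le_exp (by positivity))
    calc (1:ℝ) = ∫ _, (1:ℝ) ∂P := by simp
      _ ≤ _ := integral_mono_ae (integrable_const 1) hg2_int hae
  have hlogC : Real.log C = (1/2) * Real.log (2*Real.pi*(a+4)) - a/(2*(a+4)) := by
    rw [hC, Real.log_mul (Real.sqrt_pos.2 (by positivity)).ne' (Real.exp_pos _).ne',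
      Real.log_sqrt (by positivity), Real.log_exp]
    ring
  have hMnn : 0 ≤ M := le_trans (Real.log_nonneg hE1) hM
  rcases eq_or_lt_of_le
    (integral_nonneg (fun f => hg1_nonneg f) :
      0 ≤ ∫ f, ∫ p, Real.exp (expRisk D ev f - nllLoss ev f p) ∂D ∂P) with h0 | h0
  · rw [← h0, Real.log_zero]
    have hl := logfact hb
    rw [show ((a+4)-4)/(2*(a+4)) = a/(2*(a+4)) by ring] at hl
    have hl2 : (0:ℝ) < Real.log 2 := Real.log_pos (by norm_num)
    linarith
  · calc Real.log (∫ f, ∫ p, Real.exp (expRisk D ev f - nllLoss ev f p) ∂D ∂P)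
        ≤ Real.log (C * ∫ f, ∫ p, Real.exp (c * (p.2 * ev f p.1) ^ 2) ∂D ∂P) :=
          Real.log_le_log h0 houter
      _ = Real.log C + Real.log (∫ f, ∫ p, Real.exp (c * (p.2 * ev f p.1) ^ 2) ∂D ∂P) :=
          Real.log_mul hCpos.ne' (by linarith : (0:ℝ) < _).ne'
      _ ≤ (1/2) * Real.log (2*Real.pi*(a+4)) - a/(2*(a+4)) + M := by
          rw [hlogC]; linarith [hM]
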